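/- arXiv:2203.04744 — 4 statements merged into one kernel-verified Lean document; each statement's English description precedes it below -/
import Mathlib

section
/- Let $0 < \alpha < 1$ and let $b \in \mathbb{N}$ with $b > 1$. Then the Weierstrass-type function $f(t) = \sum_{j=0}^\infty b^{-j\alpha} \cos(b^j t)$ is Hölder continuous on $\mathbb{R}$ with exponent $\alpha$. -/
open Real

private lemma abs_cos_sub_cos_le_two' (x y : ℝ) : |Real.cos x - Real.cos y| ≤ 2 := by
  have h1 := Real.abs_cos_le_one x
  have h2 := Real.abs_cos_le_one y
  calc |Real.cos x - Real.cos y| ≤ |Real.cos x| + |Real.cos y| := abs_sub _ _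
    _ ≤ 2 := by linarith

private lemma abs_cos_sub_cos_le_abs' (x y : ℝ) : |Real.cos x - Real.cos y| ≤ |x - y| := by
  rw [Real.cos_sub_cos]
  have h1 := Real.abs_sin_le_one ((x + y) / 2)
  have h2 := Real.abs_sin_le_abs (x := (x - y) / 2)
  have h3 : |(x - y) / 2| = |x - y| / 2 := by rw [abs_div]; norm_num
  rw [h3] at h2
  calc |(-2) * Real.sin ((x + y) / 2) * Real.sin ((x - y) / 2)|
      = 2 * |Real.sin ((x + y) / 2)| * |Real.sin ((x - y) / 2)| := by
        rw [abs_mul, abs_mul]; norm_num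
    _ ≤ 2 * 1 * (|x - y| / 2) := by
        apply mul_le_mul _ h2 (abs_nonneg _) (by positivity)
        exact mul_le_mul_of_nonneg_left h1 (by norm_num)
    _ = |x - y| := by ring

/-- **The Weierstrass-type function is `α`-Hölder.**
For `0 < α < 1` and an integer `b > 1`, the function
`f t = ∑' j, b ^ (-j * α) * cos (b ^ j * t)` is Hölder continuous with exponent `α`. -/
theorem weierstrass_holder
    (α : ℝ) (hα0 : 0 < α) (hα1 : α < 1) (b : ℕ) (hb : 1 < b)
    (f : ℝ → ℝ)
    (hf : ∀ t : ℝ, f t = ∑' j : ℕ, (b : ℝ) ^ (-(j : ℝ) * α) * Real.cos ((b : ℝ) ^ j * t)) :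
    ∃ C : ℝ, ∀ s t : ℝ, |f s - f t| ≤ C * |s - t| ^ α := by
  have hb1 : (1 : ℝ) < (b : ℝ) := by exact_mod_cast hb
  have hb0 : (0 : ℝ) < (b : ℝ) := by linarith
  set r : ℝ := (b : ℝ) ^ (-α) with hr_def
  set q : ℝ := (b : ℝ) ^ (1 - α) with hq_def
  have hr0 : 0 < r := Real.rpow_pos_of_pos hb0 _
  have hr1 : r < 1 := Real.rpow_lt_one_of_one_lt_of_neg hb1 (by linarith)
  have hq1 : 1 < q := by
    rw [hq_def, Real.one_lt_rpow_iff_of_pos hb0]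
    exact Or.inl ⟨hb1, by linarith⟩
  have hq0 : 0 < q := by linarith
  -- coefficient identity
  have hcoef : ∀ j : ℕ, (b : ℝ) ^ (-(j : ℝ) * α) = r ^ j := by
    intro j
    rw [hr_def, ← Real.rpow_natCast ((b : ℝ) ^ (-α)) j, ← Real.rpow_mul hb0.le]
    ring_nf
  have hrbq : r * (b : ℝ) = q := by
    rw [hr_def, hq_def]
    nth_rewrite 2 [← Real.rpow_one (b : ℝ)]
    rw [← Real.rpow_add hb0]
    ring_nf
  have hrb : ∀ j : ℕ, r ^ j * (b : ℝ) ^ j = q ^ j := by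
    intro j; rw [← mul_pow, hrbq]
  -- the term function
  set g : ℕ → ℝ → ℝ := fun j t => (b : ℝ) ^ (-(j : ℝ) * α) * Real.cos ((b : ℝ) ^ j * t) with hg_def
  have hgabs : ∀ j t, |g j t| ≤ r ^ j := by
    intro j t
    rw [hg_def]
    simp only
    rw [abs_mul, hcoef j, abs_of_pos (pow_pos hr0 j)]
    have := Real.abs_cos_le_one ((b : ℝ) ^ j * t)
    nth_rewrite 2 [← mul_one (r ^ j)]
    exact mul_le_mul_of_nonneg_left this (pow_pos hr0 j).le
  have hgsum : ∀ t, Summable (fun j => g j t) := by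
    intro t
    apply Summable.of_norm_bounded (summable_geometric_of_lt_one hr0.le hr1)
    intro j
    exact hgabs j t
  -- bounds on term differences
  have hA : ∀ (j : ℕ) (s t : ℝ), |g j s - g j t| ≤ 2 * r ^ j := by
    intro j s t
    rw [hg_def]
    simp only
    rw [← mul_sub, abs_mul, hcoef j, abs_of_pos (pow_pos hr0 j)]
    have := abs_cos_sub_cos_le_two' ((b : ℝ) ^ j * s) ((b : ℝ) ^ j * t)
    rw [mul_comm]
    exact mul_le_mul_of_nonneg_right this (pow_pos hr0 j).le
  have hB : ∀ (j : ℕ) (s t : ℝ), |g j s - g j t| ≤ q ^ j * |s - t| := by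
    intro j s t
    rw [hg_def]
    simp only
    rw [← mul_sub, abs_mul, hcoef j, abs_of_pos (pow_pos hr0 j)]
    have h := abs_cos_sub_cos_le_abs' ((b : ℝ) ^ j * s) ((b : ℝ) ^ j * t)
    have h2 : |(b : ℝ) ^ j * s - (b : ℝ) ^ j * t| = (b : ℝ) ^ j * |s - t| := by
      rw [← mul_sub, abs_mul, abs_of_pos (pow_pos hb0 j)]
    rw [h2] at h
    calc r ^ j * |Real.cos ((b : ℝ) ^ j * s) - Real.cos ((b : ℝ) ^ j * t)|
        ≤ r ^ j * ((b : ℝ) ^ j * |s - t|) :=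
          mul_le_mul_of_nonneg_left h (pow_pos hr0 j).le
      _ = q ^ j * |s - t| := by rw [← mul_assoc, hrb j]
  -- the constant
  refine ⟨(b : ℝ) ^ (1 - α) / (q - 1) + 2 * (1 - r)⁻¹, ?_⟩
  intro s t
  by_cases hst : s = t
  · subst hst
    simp only [sub_self, abs_zero]
    rw [Real.zero_rpow (ne_of_gt hα0), mul_zero]
  set h : ℝ := |s - t| with hh_def
  have hh0 : 0 < h := abs_pos.mpr (sub_ne_zero.mpr hst)
  have hha : 0 < h ^ α := Real.rpow_pos_of_pos hh0 _
  -- choose the cutoff N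
  have hkey : ∃ N : ℕ, r ^ N ≤ h ^ α ∧
      (∑ j ∈ Finset.range N, q ^ j) * h ≤ (b : ℝ) ^ (1 - α) / (q - 1) * h ^ α := by
    by_cases hh1 : 1 ≤ h
    · refine ⟨0, ?_, ?_⟩
      · simpa using Real.one_le_rpow hh1 hα0.le
      · simp only [Finset.range_zero, Finset.sum_empty, zero_mul]
        exact mul_nonneg (div_nonneg (by positivity) (by linarith)) (by positivity)
    · push_neg at hh1
      have hex : ∃ n : ℕ, 1 / h < (b : ℝ) ^ n := pow_unbounded_of_one_lt (1 / h) hb1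
      set N := Nat.find hex with hN_def
      have hN : 1 / h < (b : ℝ) ^ N := Nat.find_spec hex
      have hNpos : 0 < N := by
        rcases Nat.eq_zero_or_pos N with h0 | h0
        · exfalso
          rw [h0] at hN
          simp only [pow_zero] at hN
          have : 1 < 1 / h := one_lt_one_div hh0 hh1
          -- 1/h < 1 contradicts 1 < 1/h
          linarith
        · exact h0
      have hNprev : (b : ℝ) ^ (N - 1) ≤ 1 / h := by
        have := Nat.find_min hex (m := N - 1) (by omega)
        push_neg at this
        exact this
      have hbNh : (b : ℝ) ^ N ≤ (b : ℝ) / h := by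
        have he : (b : ℝ) ^ N = (b : ℝ) ^ (N - 1) * (b : ℝ) := by
          rw [← pow_succ]
          congr 1
          omega
        calc (b : ℝ) ^ N = (b : ℝ) ^ (N - 1) * (b : ℝ) := he
          _ ≤ (1 / h) * (b : ℝ) := mul_le_mul_of_nonneg_right hNprev hb0.le
          _ = (b : ℝ) / h := by ring
      refine ⟨N, ?_, ?_⟩
      · -- r ^ N ≤ h ^ α
        have h1 : ((b : ℝ) ^ N)⁻¹ ≤ h := by
          rw [inv_le_comm₀ (pow_pos hb0 N) hh0]
          rw [one_div] at hN
          exact hN.le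
        have h2 : (((b : ℝ) ^ N)⁻¹) ^ α ≤ h ^ α :=
          Real.rpow_le_rpow (by positivity) h1 hα0.le
        have h3 : r ^ N = (((b : ℝ) ^ N)⁻¹) ^ α := by
          rw [← Real.rpow_natCast ((b:ℝ) ^ (-α)) N, ← Real.rpow_mul hb0.le,
            ← Real.rpow_neg_one ((b:ℝ) ^ N), ← Real.rpow_natCast (b:ℝ) N,
            ← Real.rpow_mul hb0.le, ← Real.rpow_mul hb0.le]
          ring_nf
        rw [h3]
        exact h2
      · -- geometric sum bound
        have hgeom : (∑ j ∈ Finset.range N, q ^ j) = (q ^ N - 1) / (q - 1) :=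
          geom_sum_eq (ne_of_gt hq1) N
        have hqN : q ^ N * h ≤ (b : ℝ) ^ (1 - α) * h ^ α := by
          have h1 : q ^ N = ((b : ℝ) ^ N) ^ (1 - α) := by
            rw [← Real.rpow_natCast ((b:ℝ) ^ (1 - α)) N, ← Real.rpow_mul hb0.le,
              ← Real.rpow_natCast (b:ℝ) N, ← Real.rpow_mul hb0.le]
            ring_nf
          have h2 : ((b : ℝ) ^ N) ^ (1 - α) ≤ ((b : ℝ) / h) ^ (1 - α) :=
            Real.rpow_le_rpow (by positivity) hbNh (by linarith)
          have h3 : ((b : ℝ) / h) ^ (1 - α) = (b : ℝ) ^ (1 - α) / h ^ (1 - α) :=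
            Real.div_rpow hb0.le (by linarith) _
          have h4 : h ^ (1 - α) * h ^ α = h := by
            rw [← Real.rpow_add hh0]; norm_num
          rw [h1]
          calc ((b : ℝ) ^ N) ^ (1 - α) * h ≤ ((b : ℝ) / h) ^ (1 - α) * h :=
                mul_le_mul_of_nonneg_right h2 hh0.le
            _ = (b : ℝ) ^ (1 - α) / h ^ (1 - α) * h := by rw [h3]
            _ = (b : ℝ) ^ (1 - α) * h ^ α := by
                have hp : (0:ℝ) < h ^ (1 - α) := Real.rpow_pos_of_pos hh0 _
                rw [div_mul_eq_mul_div, div_eq_iff (ne_of_gt hp)]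
                linear_combination (-(b : ℝ) ^ (1 - α)) * h4
        have hden : (0:ℝ) < q - 1 := by linarith
        rw [hgeom, div_mul_eq_mul_div, div_mul_eq_mul_div,
          div_le_div_iff₀ hden hden]
        nlinarith [mul_le_mul_of_nonneg_right hqN hden.le, mul_pos hh0 hden]
  obtain ⟨N, hN1, hN2⟩ := hkey
  -- summability of differences
  have hd : Summable (fun j => |g j s - g j t|) := by
    apply Summable.of_nonneg_of_le (fun j => abs_nonneg _) (fun j => hA j s t)
    exact (summable_geometric_of_lt_one hr0.le hr1).mul_left 2
  have hdiff : f s - f t = ∑' j : ℕ, (g j s - g j t) := by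
    rw [hf s, hf t]
    exact (Summable.tsum_sub (hgsum s) (hgsum t)).symm
  have habs : |f s - f t| ≤ ∑' j : ℕ, |g j s - g j t| := by
    rw [hdiff]
    have hd2 : Summable (fun j : ℕ => ‖g j s - g j t‖) := by
      simpa [Real.norm_eq_abs] using hd
    have := norm_tsum_le_tsum_norm (f := fun j : ℕ => g j s - g j t) hd2
    simpa [Real.norm_eq_abs] using this
  -- split the sum
  have hd' : Summable (fun j : ℕ => |g j s - g j t|) := hd
  have hsplit := Summable.sum_add_tsum_nat_add (f := fun j : ℕ => |g j s - g j t|) N hd'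
  -- bound finite part
  have hfin : ∑ j ∈ Finset.range N, |g j s - g j t| ≤ (∑ j ∈ Finset.range N, q ^ j) * h := by
    rw [Finset.sum_mul]
    exact Finset.sum_le_sum (fun j _ => hB j s t)
  -- bound tail part
  have htail : ∑' k : ℕ, |g (k + N) s - g (k + N) t| ≤ 2 * (1 - r)⁻¹ * h ^ α := by
    have h1 : ∑' k : ℕ, |g (k + N) s - g (k + N) t| ≤ ∑' k : ℕ, 2 * r ^ N * r ^ k := by
      apply Summable.tsum_le_tsum
      · intro k
        calc |g (k + N) s - g (k + N) t| ≤ 2 * r ^ (k + N) := hA (k + N) s t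
          _ = 2 * r ^ N * r ^ k := by rw [pow_add]; ring
      · exact (Summable.comp_injective hd' (add_left_injective N))
      · exact (summable_geometric_of_lt_one hr0.le hr1).mul_left _
    have h2 : ∑' k : ℕ, 2 * r ^ N * r ^ k = 2 * r ^ N * (1 - r)⁻¹ := by
      rw [tsum_mul_left, tsum_geometric_of_lt_one hr0.le hr1]
    calc ∑' k : ℕ, |g (k + N) s - g (k + N) t| ≤ 2 * r ^ N * (1 - r)⁻¹ := by rw [← h2]; exact h1
      _ ≤ 2 * h ^ α * (1 - r)⁻¹ := by
          apply mul_le_mul_of_nonneg_right _ (inv_nonneg.mpr (by linarith))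
          linarith
      _ = 2 * (1 - r)⁻¹ * h ^ α := by ring
  calc |f s - f t| ≤ ∑' j : ℕ, |g j s - g j t| := habs
    _ = ∑ j ∈ Finset.range N, |g j s - g j t| + ∑' k : ℕ, |g (k + N) s - g (k + N) t| :=
        hsplit.symm
    _ ≤ (∑ j ∈ Finset.range N, q ^ j) * h + 2 * (1 - r)⁻¹ * h ^ α := add_le_add hfin htail
    _ ≤ (b : ℝ) ^ (1 - α) / (q - 1) * h ^ α + 2 * (1 - r)⁻¹ * h ^ α := by linarith
    _ = ((b : ℝ) ^ (1 - α) / (q - 1) + 2 * (1 - r)⁻¹) * h ^ α := by ring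
end

section
/- Let $0 < \alpha < 1$ and let $b \in \mathbb{N}$ with $b > 1$. Then for any $\beta$ with $\alpha < \beta \le 1$, the function $f(t) = \sum_{j=0}^\infty b^{-j\alpha} \cos(b^j t)$ is not Hölder continuous on $\mathbb{R}$ with exponent $\beta$. -/
open Real

/-- **The Weierstrass-type function is not `β`-Hölder for `β > α`.**
For `0 < α < 1`, integer `b > 1`, and any `β` with `α < β ≤ 1`, the function
`f t = ∑' j, b ^ (-j * α) * cos (b ^ j * t)` is not Hölder continuous with exponent `β`. -/
theorem weierstrass_not_holder_gt
    (α : ℝ) (hα0 : 0 < α) (hα1 : α < 1) (b : ℕ) (hb : 1 < b)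
    (f : ℝ → ℝ)
    (hf : ∀ t : ℝ, f t = ∑' j : ℕ, (b : ℝ) ^ (-(j : ℝ) * α) * Real.cos ((b : ℝ) ^ j * t))
    (β : ℝ) (hβα : α < β) (hβ1 : β ≤ 1) :
    ¬ ∃ C : ℝ, ∀ s t : ℝ, |f s - f t| ≤ C * |s - t| ^ β := by
  rintro ⟨C, hC⟩
  have hb1 : (1 : ℝ) < (b : ℝ) := by exact_mod_cast hb
  have hbpos : (0 : ℝ) < (b : ℝ) := by linarith
  -- rewrite of the coefficient
  have hcoef : ∀ j : ℕ, (b : ℝ) ^ (-(j : ℝ) * α) = ((b : ℝ) ^ (-α)) ^ j := by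
    intro j
    rw [← Real.rpow_natCast ((b : ℝ) ^ (-α)) j, ← Real.rpow_mul hbpos.le]
    ring_nf
  have hrlt : (b : ℝ) ^ (-α) < 1 :=
    Real.rpow_lt_one_of_one_lt_of_neg hb1 (by linarith)
  have hrpos : (0 : ℝ) < (b : ℝ) ^ (-α) := Real.rpow_pos_of_pos hbpos _
  have hgeo : Summable (fun j : ℕ => ((b : ℝ) ^ (-α)) ^ j) :=
    summable_geometric_of_lt_one hrpos.le hrlt
  have hsum : ∀ t : ℝ, Summable (fun j : ℕ =>
      (b : ℝ) ^ (-(j : ℝ) * α) * Real.cos ((b : ℝ) ^ j * t)) := by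
    intro t
    apply Summable.of_norm_bounded hgeo
    intro j
    rw [norm_mul, ← hcoef j]
    have h1 : ‖(b : ℝ) ^ (-(j : ℝ) * α)‖ = (b : ℝ) ^ (-(j : ℝ) * α) :=
      Real.norm_of_nonneg (Real.rpow_nonneg hbpos.le _)
    rw [h1, hcoef j]
    calc ((b:ℝ)^(-α))^j * ‖Real.cos ((b : ℝ) ^ j * t)‖
        ≤ ((b:ℝ)^(-α))^j * 1 := by
          apply mul_le_mul_of_nonneg_left _ (pow_nonneg hrpos.le j)
          rw [Real.norm_eq_abs]; exact Real.abs_cos_le_one _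
      _ = ((b:ℝ)^(-α))^j := mul_one _
  -- key difference identity
  have key : ∀ t : ℝ, f 0 - f t = ∑' j : ℕ,
      (b : ℝ) ^ (-(j : ℝ) * α) * (1 - Real.cos ((b : ℝ) ^ j * t)) := by
    intro t
    rw [hf 0, hf t, ← Summable.tsum_sub (hsum 0) (hsum t)]
    apply tsum_congr
    intro j
    rw [mul_zero, Real.cos_zero]
    ring
  have hKpos : 0 < 1 - Real.cos (2 * π / (b:ℝ)) := by
    have h1 : Real.cos (2 * π / b) < Real.cos 0 := by
      apply Real.cos_lt_cos_of_nonneg_of_le_pi le_rfl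
      · rw [div_le_iff₀ hbpos]
        have : (2:ℝ) ≤ b := by exact_mod_cast hb
        nlinarith [Real.pi_pos]
      · positivity
    rw [Real.cos_zero] at h1
    linarith
  -- main inequality for each J
  set K : ℝ := 1 - Real.cos (2 * π / (b:ℝ)) with hK
  have main : ∀ J : ℕ, K * (b : ℝ) ^ (-(J : ℝ) * α) ≤
      C * (2 * π) ^ β * ((b : ℝ) ^ (-β)) ^ (J + 1) := by
    intro J
    set t : ℝ := 2 * π / (b : ℝ) ^ (J + 1) with ht
    have htpos : 0 < t := by positivity
    have hsumdiff : Summable (fun j : ℕ =>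
        (b : ℝ) ^ (-(j : ℝ) * α) * (1 - Real.cos ((b : ℝ) ^ j * t))) := by
      have := ((hsum 0).sub (hsum t))
      apply this.congr
      intro j
      rw [mul_zero, Real.cos_zero]
      ring
    have hterm : K * (b : ℝ) ^ (-(J : ℝ) * α) ≤ f 0 - f t := by
      rw [key t, hK, mul_comm]
      have harg : (b : ℝ) ^ J * t = 2 * π / b := by
        rw [ht, pow_succ]
        field_simp
      have := Summable.le_tsum hsumdiff J (fun i _ => by
        apply mul_nonneg (Real.rpow_nonneg hbpos.le _)
        have := Real.cos_le_one ((b : ℝ) ^ i * t)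
        linarith)
      rw [harg] at this
      exact this
    have hupper : f 0 - f t ≤ C * (2 * π) ^ β * ((b : ℝ) ^ (-β)) ^ (J + 1) := by
      have h1 := hC 0 t
      have h2 : |(0 : ℝ) - t| = t := by
        rw [zero_sub, abs_neg, abs_of_pos htpos]
      rw [h2] at h1
      have h3 : t ^ β = (2 * π) ^ β * ((b : ℝ) ^ (-β)) ^ (J + 1) := by
        rw [ht, Real.div_rpow (by positivity) (by positivity)]
        rw [div_eq_mul_inv]
        congr 1
        rw [← Real.rpow_natCast ((b : ℝ)) (J + 1), ← Real.rpow_natCast ((b : ℝ) ^ (-β)) (J + 1),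
          ← Real.rpow_mul hbpos.le, ← Real.rpow_mul hbpos.le, ← Real.rpow_neg hbpos.le]
        ring_nf
      calc f 0 - f t ≤ |f 0 - f t| := le_abs_self _
        _ ≤ C * t ^ β := h1
        _ = C * ((2 * π) ^ β * ((b : ℝ) ^ (-β)) ^ (J + 1)) := by rw [h3]
        _ = C * (2 * π) ^ β * ((b : ℝ) ^ (-β)) ^ (J + 1) := by ring
    linarith
  -- derive K ≤ D * ρ^J, with ρ = b^{-(β-α)} < 1
  set ρ : ℝ := (b : ℝ) ^ (-(β - α)) with hρ
  have hρpos : 0 < ρ := Real.rpow_pos_of_pos hbpos _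
  have hρlt : ρ < 1 := Real.rpow_lt_one_of_one_lt_of_neg hb1 (by linarith)
  have main2 : ∀ J : ℕ, K ≤ (C * (2 * π) ^ β * (b : ℝ) ^ (-β)) * ρ ^ J := by
    intro J
    have h := main J
    have hA : (0 : ℝ) < (b : ℝ) ^ ((J : ℝ) * α) := Real.rpow_pos_of_pos hbpos _
    rw [← mul_le_mul_iff_of_pos_right hA] at h
    have hl : K * (b : ℝ) ^ (-(J : ℝ) * α) * (b : ℝ) ^ ((J : ℝ) * α) = K := by
      rw [mul_assoc, ← Real.rpow_add hbpos]
      norm_num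
    rw [hl] at h
    refine h.trans (le_of_eq ?_)
    rw [pow_succ]
    rw [← Real.rpow_natCast ((b : ℝ) ^ (-β)) J, ← Real.rpow_natCast ((b : ℝ) ^ (-(β - α))) J,
      ← Real.rpow_mul hbpos.le, ← Real.rpow_mul hbpos.le]
    rw [show C * (2 * π) ^ β * ((b:ℝ) ^ (-β * (J:ℕ)) * (b:ℝ) ^ (-β)) * (b:ℝ) ^ ((J : ℝ) * α)
        = C * (2 * π) ^ β * (b:ℝ) ^ (-β) * ((b:ℝ) ^ (-β * (J:ℕ)) * (b:ℝ) ^ ((J : ℝ) * α)) by ring]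
    rw [← Real.rpow_add hbpos]
    congr 1
    ring
  -- contradiction: RHS → 0
  have hlim : Filter.Tendsto (fun J : ℕ => (C * (2 * π) ^ β * (b : ℝ) ^ (-β)) * ρ ^ J)
      Filter.atTop (nhds 0) := by
    rw [show (0:ℝ) = (C * (2 * π) ^ β * (b : ℝ) ^ (-β)) * 0 by ring]
    exact (tendsto_pow_atTop_nhds_zero_of_lt_one hρpos.le hρlt).const_mul _
  have := hlim.eventually (gt_mem_nhds hKpos)
  obtain ⟨J, hJ⟩ := this.exists
  exact absurd (main2 J) (not_le.mpr hJ)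
end

section
/- Let $b \in \mathbb{N}$ with $b > 1$. Then the function $f(t) = \sum_{j=1}^\infty \frac{\cos(b^j t)}{j^2}$ is continuous on $\mathbb{R}$ but is not Hölder continuous with exponent $\beta$ for any $\beta \in (0,1]$. -/
open Real

/-- **Hardy-type function: continuous but not Hölder for any positive exponent.**
For an integer `b > 1`, the function `f t = ∑_{j ≥ 1} cos (b ^ j * t) / j ^ 2` is
continuous on `ℝ` but not Hölder continuous with exponent `β` for any `β ∈ (0, 1]`. -/
theorem hardy_not_holder
    (b : ℕ) (hb : 1 < b) (f : ℝ → ℝ)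
    (hf : ∀ t : ℝ, f t = ∑' j : ℕ, Real.cos ((b : ℝ) ^ (j + 1) * t) / ((j : ℝ) + 1) ^ 2) :
    Continuous f ∧
      ∀ β : ℝ, 0 < β → β ≤ 1 → ¬ ∃ C : ℝ, ∀ s t : ℝ, |f s - f t| ≤ C * |s - t| ^ β := by
  have hb1 : (1 : ℝ) < (b : ℝ) := by exact_mod_cast hb
  have hbpos : (0 : ℝ) < (b : ℝ) := by linarith
  -- the majorant series
  have hu : Summable (fun j : ℕ => 1 / ((j : ℝ) + 1) ^ 2) := by
    have h := (summable_nat_add_iff (f := fun n : ℕ => 1 / (n : ℝ) ^ 2) 1).mpr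
      (Real.summable_one_div_nat_pow.mpr one_lt_two)
    refine h.congr fun n => ?_
    push_cast
    ring_nf
  -- pointwise norm bound
  have hbound : ∀ (t : ℝ) (j : ℕ),
      ‖Real.cos ((b : ℝ) ^ (j + 1) * t) / ((j : ℝ) + 1) ^ 2‖ ≤ 1 / ((j : ℝ) + 1) ^ 2 := by
    intro t j
    have hpos : (0 : ℝ) < ((j : ℝ) + 1) ^ 2 := by positivity
    rw [Real.norm_eq_abs, abs_div, abs_of_pos hpos]
    gcongr
    exact Real.abs_cos_le_one _
  -- summability of the series for each t
  have hsum : ∀ t : ℝ,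
      Summable (fun j : ℕ => Real.cos ((b : ℝ) ^ (j + 1) * t) / ((j : ℝ) + 1) ^ 2) := by
    intro t
    exact Summable.of_norm_bounded hu (hbound t)
  -- value at 0
  have hf0 : f 0 = ∑' j : ℕ, 1 / ((j : ℝ) + 1) ^ 2 := by
    rw [hf 0]
    congr 1
    funext j
    simp
  constructor
  · -- continuity
    have : f = fun t => ∑' j : ℕ, Real.cos ((b : ℝ) ^ (j + 1) * t) / ((j : ℝ) + 1) ^ 2 :=
      funext hf
    rw [this]
    refine continuous_tsum (fun j => ?_) hu (fun j t => hbound t j)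
    exact (Real.continuous_cos.comp (continuous_const.mul continuous_id)).div_const _
  · -- not Hölder
    rintro β hβ hβ1 ⟨C, hC⟩
    -- key lower bound: for every m ≥ 1, 2 / m ^ 2 ≤ f 0 - f (π / b ^ m)
    have key : ∀ n : ℕ, 2 / ((n : ℝ) + 1) ^ 2 ≤ f 0 - f (π / (b : ℝ) ^ (n + 1)) := by
      intro n
      set h : ℝ := π / (b : ℝ) ^ (n + 1) with hh
      have hdiff : f 0 - f h
          = ∑' j : ℕ, (1 - Real.cos ((b : ℝ) ^ (j + 1) * h)) / ((j : ℝ) + 1) ^ 2 := by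
        rw [hf0, hf h, ← Summable.tsum_sub hu (hsum h)]
        exact tsum_congr fun j => by ring
      rw [hdiff]
      have hterm : (1 - Real.cos ((b : ℝ) ^ (n + 1) * h)) / ((n : ℝ) + 1) ^ 2
          = 2 / ((n : ℝ) + 1) ^ 2 := by
        have hbn : ((b : ℝ) ^ (n + 1)) ≠ 0 := by positivity
        rw [hh, mul_div_cancel₀ _ hbn, Real.cos_pi]
        norm_num
      have hg : Summable
          (fun j : ℕ => (1 - Real.cos ((b : ℝ) ^ (j + 1) * h)) / ((j : ℝ) + 1) ^ 2) :=
        (hu.sub (hsum h)).congr fun j => by ring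
      calc 2 / ((n : ℝ) + 1) ^ 2
          = (1 - Real.cos ((b : ℝ) ^ (n + 1) * h)) / ((n : ℝ) + 1) ^ 2 := hterm.symm
        _ ≤ ∑' j : ℕ, (1 - Real.cos ((b : ℝ) ^ (j + 1) * h)) / ((j : ℝ) + 1) ^ 2 := by
            refine Summable.le_tsum hg n fun j _ => ?_
            have h1 : Real.cos ((b : ℝ) ^ (j + 1) * h) ≤ 1 := Real.cos_le_one _
            have h2 : (0 : ℝ) < ((j : ℝ) + 1) ^ 2 := by positivity
            exact div_nonneg (by linarith) h2.le
    -- positivity facts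
    have hr : 1 < (b : ℝ) ^ β := by
      rw [Real.one_lt_rpow_iff_of_pos hbpos]
      exact Or.inl ⟨hb1, hβ⟩
    set r : ℝ := (b : ℝ) ^ β with hrdef
    have hrpos : (0 : ℝ) < r := lt_trans one_pos hr
    -- the Hölder bound forces 2 * r ^ (n+1) ≤ C * π ^ β * (n+1) ^ 2
    have hineq : ∀ n : ℕ, 2 * r ^ (n + 1) ≤ C * π ^ β * ((n : ℝ) + 1) ^ 2 := by
      intro n
      set h : ℝ := π / (b : ℝ) ^ (n + 1) with hh
      have hhpos : 0 < h := div_pos Real.pi_pos (pow_pos hbpos _)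
      have habs : |(0 : ℝ) - h| = h := by
        rw [zero_sub, abs_neg, abs_of_pos hhpos]
      have hpowβ : ((b : ℝ) ^ (n + 1)) ^ β = r ^ (n + 1) := by
        rw [← Real.rpow_natCast (b : ℝ) (n + 1), ← Real.rpow_mul hbpos.le, mul_comm,
          Real.rpow_mul hbpos.le, Real.rpow_natCast]
      have hhβ : h ^ β = π ^ β / r ^ (n + 1) := by
        rw [hh, Real.div_rpow Real.pi_pos.le (pow_pos hbpos _).le, hpowβ]
      have h1 : 2 / ((n : ℝ) + 1) ^ 2 ≤ C * π ^ β / r ^ (n + 1) := by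
        calc 2 / ((n : ℝ) + 1) ^ 2 ≤ f 0 - f h := key n
          _ ≤ |f 0 - f h| := le_abs_self _
          _ ≤ C * |(0 : ℝ) - h| ^ β := hC 0 h
          _ = C * π ^ β / r ^ (n + 1) := by rw [habs, hhβ, mul_div_assoc]
      have hA : (0 : ℝ) < ((n : ℝ) + 1) ^ 2 := by positivity
      have hR : (0 : ℝ) < r ^ (n + 1) := pow_pos hrpos _
      rw [div_le_div_iff₀ hA hR] at h1
      linarith
    have hC0 : (0 : ℝ) < C * π ^ β := by
      have h0 := hineq 0
      have : (0 : ℝ) < 2 * r ^ (0 + 1) := by positivity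
      nlinarith
    -- polynomial times geometric tends to zero
    have hnorm : ‖(1 / r : ℝ)‖ < 1 := by
      rw [Real.norm_eq_abs, abs_of_pos (by positivity), div_lt_one hrpos]
      exact hr
    have hT : Filter.Tendsto (fun n : ℕ => (n : ℝ) ^ 2 * (1 / r) ^ n)
        Filter.atTop (nhds 0) :=
      (summable_pow_mul_geometric_of_norm_lt_one 2 hnorm).tendsto_atTop_zero
    have hT' := hT.comp (Filter.tendsto_add_atTop_nat 1)
    obtain ⟨N, hN⟩ := (hT'.eventually
      (gt_mem_nhds (show (0 : ℝ) < 2 / (C * π ^ β) by positivity))).exists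
    simp only [Function.comp] at hN
    have hNcast : ((N + 1 : ℕ) : ℝ) = (N : ℝ) + 1 := by push_cast; ring
    have hR : (0 : ℝ) < r ^ (N + 1) := pow_pos hrpos _
    have hN' : ((N : ℝ) + 1) ^ 2 / r ^ (N + 1) < 2 / (C * π ^ β) := by
      rw [div_eq_mul_inv, ← inv_pow, ← one_div]
      rw [hNcast] at hN
      exact hN
    rw [div_lt_div_iff₀ hR hC0] at hN'
    have := hineq N
    nlinarith
end

section
/- Let $n \ge 2$ and let $u(x) = \sum_{j=1}^\infty \frac{1}{j^2}\mathrm{Re}(x_1+ix_2)^{2^j}$ on $\overline{\mathbb{B}_n}$. Then $u$ does not belong to $C^{0,\beta}(\overline{\mathbb{B}_n})$ for any $\beta \in (0,1]$. -/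
open Metric

noncomputable section

private lemma aux_summable : Summable (fun j : ℕ => 1 / ((j : ℝ) + 1) ^ 2) := by
  have := (summable_nat_add_iff (f := fun n : ℕ => 1 / (n : ℝ) ^ 2) 1).2
    (Real.summable_one_div_nat_pow.2 one_lt_two)
  simpa [add_comm] using this

/-- **The function `u x = ∑_{j≥1} j⁻² Re (x₁ + i x₂) ^ (2^j)` is not `β`-Hölder on the
closed unit ball for any `β ∈ (0, 1]`.** -/
theorem hadamard_type_series_not_holder (n : ℕ) (hn : 2 ≤ n)
    (u : EuclideanSpace ℝ (Fin n) → ℝ)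
    (hu : ∀ x, u x = ∑' j : ℕ, (1 / ((j : ℝ) + 1) ^ 2) *
        ((((x ⟨0, by omega⟩ : ℝ) : ℂ) + (x ⟨1, by omega⟩ : ℝ) * Complex.I) ^ (2 ^ (j + 1)) |>.re)) :
    ∀ β : ℝ, 0 < β → β ≤ 1 →
      ¬ ∃ C : ℝ, ∀ x ∈ closedBall (0 : EuclideanSpace ℝ (Fin n)) 1,
          ∀ y ∈ closedBall (0 : EuclideanSpace ℝ (Fin n)) 1,
            |u x - u y| ≤ C * ‖x - y‖ ^ β := by
  intro β hβ0 hβ1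
  rintro ⟨C, hC⟩
  set i0 : Fin n := ⟨0, by omega⟩ with hi0
  set i1 : Fin n := ⟨1, by omega⟩ with hi1
  set e : EuclideanSpace ℝ (Fin n) := EuclideanSpace.single i0 1 with he
  have hne : ‖e‖ = 1 := by simp [he]
  -- value of u along the real axis
  have hval : ∀ r : ℝ, u (r • e) = ∑' j : ℕ, (1 / ((j : ℝ) + 1) ^ 2) * r ^ (2 ^ (j + 1)) := by
    intro r
    rw [hu]
    congr 1
    funext j
    have h0 : (r • e) i0 = r := by
      simp [he, EuclideanSpace.single_apply]
    have h1 : (r • e) i1 = 0 := by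
      have : i1 ≠ i0 := by simp [hi0, hi1, Fin.ext_iff]
      simp [he, EuclideanSpace.single_apply, this]
    rw [h0, h1]
    simp [← Complex.ofReal_pow]
  -- summability
  have sb : ∀ r : ℝ, 0 ≤ r → r ≤ 1 →
      Summable (fun j : ℕ => (1 / ((j : ℝ) + 1) ^ 2) * r ^ (2 ^ (j + 1))) := by
    intro r hr0 hr1
    refine Summable.of_nonneg_of_le (fun j => by positivity) (fun j => ?_) aux_summable
    have : r ^ (2 ^ (j + 1)) ≤ 1 := pow_le_one₀ hr0 hr1
    exact mul_le_of_le_one_right (by positivity) this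
  -- the key estimate for each m
  have key : ∀ m : ℕ, 1 / (2 * ((m : ℝ) + 1) ^ 2) ≤ C * ((1 / 2 : ℝ) ^ β) ^ (m + 1) := by
    intro m
    set x : ℝ := (1 / 2 : ℝ) ^ (m + 1) with hx
    have hx0 : 0 < x := by positivity
    have hx1 : x ≤ 1 / 2 := by
      rw [hx]
      calc ((1:ℝ)/2) ^ (m+1) ≤ (1/2) ^ 1 := by
            exact pow_le_pow_of_le_one (by norm_num) (by norm_num) (by omega)
        _ = 1/2 := pow_one _
    set r : ℝ := 1 - x with hr
    have hr0 : 0 ≤ r := by rw [hr]; linarith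
    have hr1 : r ≤ 1 := by rw [hr]; linarith
    -- both points are in the closed ball
    have hx_mem : r • e ∈ closedBall (0 : EuclideanSpace ℝ (Fin n)) 1 := by
      rw [mem_closedBall_zero_iff, norm_smul, hne, mul_one, Real.norm_eq_abs,
        abs_of_nonneg hr0]
      exact hr1
    have hy_mem : e ∈ closedBall (0 : EuclideanSpace ℝ (Fin n)) 1 := by
      rw [mem_closedBall_zero_iff, hne]
    have hdist : ‖e - r • e‖ = x := by
      have : e - r • e = x • e := by
        rw [hr]; module
      rw [this, norm_smul, hne, mul_one, Real.norm_eq_abs, abs_of_pos hx0]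
    -- lower bound on u e - u (r • e)
    have hterm : ∀ j : ℕ, 0 ≤ (1 / ((j : ℝ) + 1) ^ 2) * (1 - r ^ (2 ^ (j + 1))) := by
      intro j
      have : r ^ (2 ^ (j + 1)) ≤ 1 := pow_le_one₀ hr0 hr1
      have h2 : (0:ℝ) ≤ 1 / ((j : ℝ) + 1) ^ 2 := by positivity
      nlinarith
    have hsum_diff : u e - u (r • e)
        = ∑' j : ℕ, (1 / ((j : ℝ) + 1) ^ 2) * (1 - r ^ (2 ^ (j + 1))) := by
      have h1 : u e = ∑' j : ℕ, (1 / ((j : ℝ) + 1) ^ 2) * (1:ℝ) ^ (2 ^ (j + 1)) := by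
        simpa using hval 1
      rw [h1, hval r, ← Summable.tsum_sub (sb 1 zero_le_one le_rfl) (sb r hr0 hr1)]
      congr 1; funext j; ring
    -- single-term lower bound
    have hsummable_diff : Summable
        (fun j : ℕ => (1 / ((j : ℝ) + 1) ^ 2) * (1 - r ^ (2 ^ (j + 1)))) := by
      refine Summable.of_nonneg_of_le hterm (fun j => ?_) aux_summable
      have h : (1:ℝ) - r ^ (2 ^ (j + 1)) ≤ 1 := by
        have := pow_nonneg hr0 (2 ^ (j + 1)); linarith
      exact mul_le_of_le_one_right (by positivity) h
    have hge : (1 / ((m : ℝ) + 1) ^ 2) * (1 - r ^ (2 ^ (m + 1))) ≤ u e - u (r • e) := by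
      rw [hsum_diff]
      exact Summable.le_tsum hsummable_diff m (fun j _ => hterm j)
    -- Bernoulli-type bound: r ^ (2^(m+1)) ≤ 1/2
    have hNx : (2 ^ (m + 1) : ℝ) * x = 1 := by
      rw [hx]
      rw [one_div, inv_pow, mul_inv_cancel₀ (by positivity)]
    have hbern : r ^ (2 ^ (m + 1)) ≤ 1 / 2 := by
      have hBern : (2 : ℝ) ≤ (1 + x) ^ (2 ^ (m + 1)) := by
        have := one_add_mul_le_pow (a := x) (by linarith) (2 ^ (m + 1))
        calc (2:ℝ) = 1 + (2 ^ (m+1) : ℝ) * x := by rw [hNx]; norm_num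
          _ ≤ (1 + x) ^ (2 ^ (m + 1)) := by
              simpa [mul_comm] using this
      have hprod : r ^ (2 ^ (m + 1)) * (1 + x) ^ (2 ^ (m + 1)) ≤ 1 := by
        rw [← mul_pow]
        have h1 : r * (1 + x) = 1 - x ^ 2 := by rw [hr]; ring
        rw [h1]
        exact pow_le_one₀ (by nlinarith) (by nlinarith)
      nlinarith [pow_nonneg hr0 (2 ^ (m + 1))]
    have hlow : 1 / (2 * ((m : ℝ) + 1) ^ 2) ≤ u e - u (r • e) := by
      have hhalf : (1:ℝ)/2 ≤ 1 - r ^ (2 ^ (m+1)) := by linarith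
      have h5 : 1 / (2 * ((m:ℝ)+1)^2) = (1/((m:ℝ)+1)^2) * (1/2) := by
        field_simp
      rw [h5]
      exact le_trans (mul_le_mul_of_nonneg_left hhalf (by positivity)) hge
    -- Hölder estimate
    have hH := hC e hy_mem (r • e) hx_mem
    rw [hdist] at hH
    have hx_rpow : x ^ β = ((1 / 2 : ℝ) ^ β) ^ (m + 1) := by
      rw [hx, ← Real.rpow_natCast ((1:ℝ)/2) (m+1), ← Real.rpow_mul (by norm_num),
        mul_comm, Real.rpow_mul (by norm_num), Real.rpow_natCast]
    calc 1 / (2 * ((m : ℝ) + 1) ^ 2) ≤ u e - u (r • e) := hlow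
      _ ≤ |u e - u (r • e)| := le_abs_self _
      _ ≤ C * x ^ β := hH
      _ = C * ((1 / 2 : ℝ) ^ β) ^ (m + 1) := by rw [hx_rpow]
  -- derive a contradiction
  set q : ℝ := (1 / 2 : ℝ) ^ β with hq
  have hq0 : 0 < q := Real.rpow_pos_of_pos (by norm_num) β
  have hq1 : q < 1 := by
    rw [hq]
    exact Real.rpow_lt_one (by norm_num) (by norm_num) hβ0
  have hCpos : 0 < C := by
    have := key 0
    have h1 : (0:ℝ) < 1 / (2 * ((0 : ℝ) + 1) ^ 2) := by norm_num
    nlinarith [pow_pos hq0 1]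
  -- (m+1)^2 * q^(m+1) ≥ 1/(2C) for all m, contradicting the limit 0
  have hlim : Filter.Tendsto (fun k : ℕ => (k : ℝ) ^ 2 * q ^ k) Filter.atTop (nhds 0) :=
    tendsto_pow_const_mul_const_pow_of_lt_one 2 hq0.le hq1
  have hev : ∀ᶠ k : ℕ in Filter.atTop, (k : ℝ) ^ 2 * q ^ k < 1 / (2 * C) := by
    have h := hlim.eventually (eventually_lt_nhds (show (0:ℝ) < 1 / (2 * C) by positivity))
    exact h
  obtain ⟨k, hk, hk1⟩ := (hev.and (Filter.eventually_ge_atTop 1)).exists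
  obtain ⟨m, rfl⟩ : ∃ m, k = m + 1 := ⟨k - 1, by omega⟩
  have h1 := key m
  have hcast : ((m + 1 : ℕ) : ℝ) = (m : ℝ) + 1 := by push_cast; ring
  rw [hcast] at hk
  have h2 : (0:ℝ) < ((m : ℝ) + 1) ^ 2 := by positivity
  rw [div_le_iff₀ (by positivity)] at h1
  rw [div_eq_mul_inv] at hk
  have hk' : 2 * C * (((m:ℝ) + 1) ^ 2 * q ^ (m + 1)) < 1 := by
    have h3 := mul_lt_mul_of_pos_left hk (show (0:ℝ) < 2 * C by positivity)
    rwa [one_mul, mul_inv_cancel₀ (by positivity)] at h3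
  nlinarith [hk', h1]
end
end
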